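/- arXiv:0810.3884 — 5 statements merged into one kernel-verified Lean document; each statement's English description precedes it below -/
import Mathlib

section
/- Let b ≥ 1 and r ≥ 1 be integers, let c_1, …, c_b ∈ ℂ be pairwise distinct, let r_1, …, r_b be positive integers with r = r_1 + ⋯ + r_b, and let a_1, …, a_r ∈ ℂ be a list in which each value c_l occurs exactly r_l times. For λ ∈ ℂ^r define B_λ(Y) = Σ_{i=1}^r λ_i ∏_{j≠i} (Y − a_j) and H_λ(Y) = B_λ(Y) / ∏_{l=1}^b (Y − c_l)^{r_l − 1} ∈ ℂ[Y]. Then there exists a nonzero polynomial D in r variables over ℂ such that for every λ ∈ ℂ^r with D(λ) ≠ 0, the polynomial H_λ has degree exactly b − 1 and has exactly b − 1 distinct roots in ℂ. In particular the set of such λ contains a nonempty Zariski-open subset of ℂ^r (for instance λ = (1, 0, …, 0) has the property). -/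
open Polynomial Finset

namespace Stmt1Aux

variable {R : Type*} [CommRing R]

noncomputable def polyOf {d : ℕ} (w : Fin d → R) : R[X] :=
  ∑ j : Fin d, C (w j) * X ^ (j : ℕ)

lemma coeff_polyOf {d : ℕ} (w : Fin d → R) (i : Fin d) :
    (polyOf w).coeff (i : ℕ) = w i := by
  simp [polyOf, coeff_X_pow, Fin.val_eq_val]

lemma degree_polyOf_lt {d : ℕ} (w : Fin d → R) : (polyOf w).degree < (d : ℕ) := by
  apply lt_of_le_of_lt (degree_sum_le _ _)
  refine (Finset.sup_lt_iff (WithBot.bot_lt_coe d)).2 ?_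
  intro j _
  exact lt_of_le_of_lt (degree_C_mul_X_pow_le _ _) (WithBot.coe_lt_coe.2 j.isLt)

lemma natDegree_polyOf_le {d : ℕ} (hd : 1 ≤ d) (w : Fin d → R) :
    (polyOf w).natDegree ≤ d - 1 := by
  by_cases h : polyOf w = 0
  · simp [h]
  · have := (natDegree_lt_iff_degree_lt h).2 (degree_polyOf_lt w)
    omega

noncomputable def sylv (d : ℕ) (f : R[X]) :
    Matrix (Fin d ⊕ Fin d) (Fin d ⊕ Fin d) R :=
  fun k j => Sum.elim
    (fun j' : Fin d => (f * X ^ (j' : ℕ)).coeff (finSumFinEquiv k : ℕ))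
    (fun j' : Fin d => (derivative f * X ^ (j' : ℕ)).coeff (finSumFinEquiv k : ℕ)) j

lemma sylv_map {S : Type*} [CommRing S] (g : R →+* S) (d : ℕ) (f : R[X]) :
    (sylv d f).map g = sylv d (f.map g) := by
  ext k j
  cases j with
  | inl j' =>
      simp only [sylv, Matrix.map_apply, Sum.elim_inl, ← coeff_map]
      rw [Polynomial.map_mul, Polynomial.map_pow, Polynomial.map_X]
  | inr j' =>
      simp only [sylv, Matrix.map_apply, Sum.elim_inr, ← coeff_map]
      rw [Polynomial.map_mul, Polynomial.map_pow, Polynomial.map_X, derivative_map]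

lemma sylv_mulVec (d : ℕ) (f : R[X]) (w : Fin d ⊕ Fin d → R) (k : Fin d ⊕ Fin d) :
    (sylv d f).mulVec w k =
      (polyOf (w ∘ Sum.inl) * f + polyOf (w ∘ Sum.inr) * derivative f).coeff
        (finSumFinEquiv k : ℕ) := by
  rw [Matrix.mulVec, dotProduct, Fintype.sum_sum_type, coeff_add]
  congr 1
  · rw [polyOf, Finset.sum_mul, finset_sum_coeff]
    apply Finset.sum_congr rfl
    intro j _
    rw [show (C ((w ∘ Sum.inl) j) * X ^ (j : ℕ)) * f
        = C ((w ∘ Sum.inl) j) * (f * X ^ (j : ℕ)) by ring, coeff_C_mul]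
    simp [sylv, Function.comp, mul_comm]
  · rw [polyOf, Finset.sum_mul, finset_sum_coeff]
    apply Finset.sum_congr rfl
    intro j _
    rw [show (C ((w ∘ Sum.inr) j) * X ^ (j : ℕ)) * derivative f
        = C ((w ∘ Sum.inr) j) * (derivative f * X ^ (j : ℕ)) by ring, coeff_C_mul]
    simp [sylv, Function.comp, mul_comm]

lemma coeff_combo_eq_zero {d : ℕ} (hd : 1 ≤ d) {f : R[X]} (hf : f.natDegree ≤ d)
    (u v : Fin d → R) {n : ℕ} (hn : d + d ≤ n) :
    (polyOf u * f + polyOf v * derivative f).coeff n = 0 := by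
  apply coeff_eq_zero_of_natDegree_lt
  have h1 : (polyOf u * f).natDegree ≤ (d - 1) + d :=
    natDegree_mul_le.trans (add_le_add (natDegree_polyOf_le hd _) hf)
  have h2 : (polyOf v * derivative f).natDegree ≤ (d - 1) + (d - 1) :=
    natDegree_mul_le.trans (add_le_add (natDegree_polyOf_le hd _)
      ((natDegree_derivative_le f).trans (by omega)))
  have h3 := natDegree_add_le (polyOf u * f) (polyOf v * derivative f)
  omega


lemma det_sylv_ne_zero {d : ℕ} {f : Polynomial ℂ} (hd : f.natDegree = d) (hf : f ≠ 0)
    (hsep : f.Separable) : (sylv d f).det ≠ 0 := by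
  rcases Nat.eq_zero_or_pos d with hd0 | hd1
  · subst hd0
    intro h0
    obtain ⟨w, hw, -⟩ := Matrix.exists_mulVec_eq_zero_iff.2 h0
    exact hw (funext fun j => by rcases j with j | j <;> exact j.elim0)
  · intro h0
    obtain ⟨w, hw, hmv⟩ := Matrix.exists_mulVec_eq_zero_iff.2 h0
    set u := polyOf (w ∘ Sum.inl) with hu
    set v := polyOf (w ∘ Sum.inr) with hv
    have hg : u * f + v * derivative f = 0 := by
      ext n
      rcases lt_or_ge n (d + d) with hn | hn
      · have hk := congrFun hmv (finSumFinEquiv.symm ⟨n, hn⟩)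
        rw [sylv_mulVec] at hk
        simpa using hk
      · simpa using coeff_combo_eq_zero hd1 hd.le (w ∘ Sum.inl) (w ∘ Sum.inr) hn
    have hdvd : f ∣ v * derivative f := by
      refine ⟨-u, ?_⟩
      have : v * derivative f = -(u * f) := by linear_combination hg
      rw [this]; ring
    have hfv : f ∣ v :=
      ((separable_def f).1 hsep).dvd_of_dvd_mul_right hdvd
    have hv0 : v = 0 := by
      refine eq_zero_of_dvd_of_degree_lt hfv ?_
      rw [degree_eq_natDegree hf, hd]
      exact degree_polyOf_lt _
    have hu0 : u = 0 := by
      rw [hv0, zero_mul, add_zero] at hg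
      rcases mul_eq_zero.1 hg with h | h
      · exact h
      · exact absurd h hf
    apply hw
    funext j
    rcases j with j | j
    · have := coeff_polyOf (w ∘ Sum.inl) j
      rw [← hu, hu0] at this
      simpa using this.symm
    · have := coeff_polyOf (w ∘ Sum.inr) j
      rw [← hv, hv0] at this
      simpa using this.symm

lemma separable_of_det_sylv_ne_zero {d : ℕ} {f : Polynomial ℂ} (hd : f.natDegree = d)
    (hf : f ≠ 0) (hdet : (sylv d f).det ≠ 0) : f.Separable := by
  rcases Nat.eq_zero_or_pos d with hd0 | hd1
  · subst hd0
    have hfc := eq_C_of_natDegree_eq_zero hd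
    have hc0 : f.coeff 0 ≠ 0 := fun h => hf (by rw [hfc, h, map_zero])
    rw [separable_def]
    refine ⟨C (f.coeff 0)⁻¹, 0, ?_⟩
    rw [zero_mul, add_zero]
    nth_rewrite 2 [hfc]
    rw [← C_mul, inv_mul_cancel₀ hc0, C_1]
  · have hunit : IsUnit (sylv d f).det := isUnit_iff_ne_zero.2 hdet
    set t : Fin d ⊕ Fin d → ℂ := fun k => if (finSumFinEquiv k : ℕ) = 0 then 1 else 0 with ht
    set w := (sylv d f)⁻¹.mulVec t with hwdef
    have hmv : (sylv d f).mulVec w = t := by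
      rw [hwdef, Matrix.mulVec_mulVec, Matrix.mul_nonsing_inv _ hunit, Matrix.one_mulVec]
    have key : polyOf (w ∘ Sum.inl) * f + polyOf (w ∘ Sum.inr) * derivative f = 1 := by
      ext n
      rcases lt_or_ge n (d + d) with hn | hn
      · have hk := congrFun hmv (finSumFinEquiv.symm ⟨n, hn⟩)
        rw [sylv_mulVec] at hk
        simp only [Equiv.apply_symm_apply] at hk
        rw [hk, ht, coeff_one]
        simp
      · rw [coeff_combo_eq_zero hd1 hd.le _ _ hn, coeff_one, if_neg (by omega)]
    rw [separable_def]
    exact ⟨polyOf (w ∘ Sum.inl), polyOf (w ∘ Sum.inr), key⟩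

end Stmt1Aux


open Stmt1Aux

/-- There is a nonzero polynomial `D` in the `r` variables `λ` such that
whenever `D(λ) ≠ 0`, the quotient `H_λ = B_λ / ∏_l (Y − c_l)^(m l − 1)` has degree
exactly `b − 1` and exactly `b − 1` distinct roots in `ℂ`; moreover
`λ = (1, 0, …, 0)` has this property. -/
theorem stmt1 (b r : ℕ) (hb : 1 ≤ b) (hr : 1 ≤ r)
    (c : Fin b → ℂ) (hc : Function.Injective c)
    (m : Fin b → ℕ) (hm : ∀ l, 0 < m l) (hsum : r = ∑ l, m l)
    (a : Fin r → ℂ)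
    (ha : ∀ l, (Finset.univ.filter fun i => a i = c l).card = m l)
    (B : (Fin r → ℂ) → Polynomial ℂ)
    (hB : ∀ lam : Fin r → ℂ, B lam =
      ∑ i, Polynomial.C (lam i) *
        ∏ j ∈ Finset.univ.erase i, (X - Polynomial.C (a j)))
    (P : Polynomial ℂ)
    (hP : P = ∏ l, (X - Polynomial.C (c l)) ^ (m l - 1)) :
    (∃ D : MvPolynomial (Fin r) ℂ, D ≠ 0 ∧
      ∀ lam : Fin r → ℂ, MvPolynomial.eval lam D ≠ 0 →
        (B lam / P).natDegree = b - 1 ∧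
        (B lam / P).roots.toFinset.card = b - 1) ∧
    ((B (fun i => if i = (⟨0, hr⟩ : Fin r) then 1 else 0) / P).natDegree = b - 1 ∧
      (B (fun i => if i = (⟨0, hr⟩ : Fin r) then 1 else 0) / P).roots.toFinset.card = b - 1) := by
  classical
  -- every a i is some c l
  have hLex : ∀ i : Fin r, ∃ l, a i = c l := by
    have hfib : (Finset.univ.biUnion
        (fun l : Fin b => Finset.univ.filter fun i => a i = c l)) = Finset.univ := by
      apply Finset.eq_univ_of_card
      rw [Finset.card_biUnion]
      · simp only [ha, Fintype.card_fin]
        exact hsum.symm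
      · intro x _ y _ hxy
        simp only [Finset.disjoint_left, Finset.mem_filter]
        rintro i ⟨-, h1⟩ ⟨-, h2⟩
        exact hxy (hc (h1 ▸ h2 ▸ rfl))
    intro i
    have : i ∈ Finset.univ.biUnion
        (fun l : Fin b => Finset.univ.filter fun i => a i = c l) := by
      rw [hfib]; exact Finset.mem_univ i
    rcases Finset.mem_biUnion.1 this with ⟨l, -, hl⟩
    exact ⟨l, (Finset.mem_filter.1 hl).2⟩
  choose L hL using hLex
  set Q : Fin b → Polynomial ℂ :=
    fun l => ∏ k ∈ Finset.univ.erase l, (X - Polynomial.C (c k)) with hQ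
  have hQmonic : ∀ l, (Q l).Monic :=
    fun l => monic_prod_of_monic _ _ fun k _ => monic_X_sub_C _
  have hQdeg : ∀ l, (Q l).natDegree = b - 1 := by
    intro l
    rw [hQ]
    rw [natDegree_prod _ _ (fun k _ => X_sub_C_ne_zero _)]
    simp [Finset.card_erase_of_mem]
  -- full product identity
  have hF : (∏ j : Fin r, (X - Polynomial.C (a j)))
      = ∏ l, (X - Polynomial.C (c l)) ^ m l := by
    rw [← Finset.prod_fiberwise_of_maps_to (fun i _ => Finset.mem_univ (L i))
      (fun j => X - Polynomial.C (a j))]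
    apply Finset.prod_congr rfl
    intro l _
    have hfilter : (Finset.univ.filter fun i => L i = l)
        = Finset.univ.filter fun i => a i = c l := by
      ext i
      simp only [Finset.mem_filter, Finset.mem_univ, true_and]
      constructor
      · rintro rfl; exact hL i
      · intro h; exact hc ((hL i).symm.trans h)
    rw [hfilter, Finset.prod_congr rfl (fun i hi => by
        rw [(Finset.mem_filter.1 hi).2]), Finset.prod_const, ha l]
  have hkey : ∀ i : Fin r,
      (∏ j ∈ Finset.univ.erase i, (X - Polynomial.C (a j))) = P * Q (L i) := by
    intro i
    apply mul_right_cancel₀ (X_sub_C_ne_zero (a i))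
    rw [Finset.prod_erase_mul _ _ (Finset.mem_univ i), hF, hL i, hP, mul_assoc,
      show Q (L i) * (X - Polynomial.C (c (L i))) = ∏ l, (X - Polynomial.C (c l)) from
        Finset.prod_erase_mul _ _ (Finset.mem_univ (L i)),
      ← Finset.prod_mul_distrib]
    apply Finset.prod_congr rfl
    intro l _
    rw [← pow_succ]
    congr 1
    exact (Nat.succ_pred_eq_of_pos (hm l)).symm
  set H : (Fin r → ℂ) → Polynomial ℂ :=
    fun lam => ∑ i, Polynomial.C (lam i) * Q (L i) with hHdef
  have hBP : ∀ lam, B lam = P * H lam := by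
    intro lam
    rw [hB lam, hHdef, Finset.mul_sum]
    apply Finset.sum_congr rfl
    intro i _
    rw [hkey i]; ring
  have hPmonic : P.Monic := by
    rw [hP]; exact monic_prod_of_monic _ _ fun l _ => (monic_X_sub_C _).pow _
  have hdiv : ∀ lam, B lam / P = H lam := fun lam => by
    rw [hBP lam]; exact mul_div_cancel_left₀ _ hPmonic.ne_zero
  have hHcoeff : ∀ lam, (H lam).coeff (b - 1) = ∑ i, lam i := by
    intro lam
    rw [hHdef, finset_sum_coeff]
    apply Finset.sum_congr rfl
    intro i _
    rw [coeff_C_mul, show (Q (L i)).coeff (b - 1) = 1 from by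
      rw [← hQdeg (L i)]; exact (hQmonic (L i)).coeff_natDegree, mul_one]
  have hHdegle : ∀ lam, (H lam).natDegree ≤ b - 1 := by
    intro lam
    apply natDegree_sum_le_of_forall_le
    intro i _
    exact (natDegree_C_mul_le _ _).trans (le_of_eq (hQdeg (L i)))
  have hHdeg : ∀ lam : Fin r → ℂ, (∑ i, lam i) ≠ 0 →
      (H lam).natDegree = b - 1 ∧ H lam ≠ 0 := by
    intro lam hs
    have h1 : (H lam).coeff (b - 1) ≠ 0 := by rw [hHcoeff]; exact hs
    refine ⟨le_antisymm (hHdegle lam) (le_natDegree_of_ne_zero h1), ?_⟩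
    intro h; exact h1 (by simp [h])
  -- generic polynomial over MvPolynomial
  set GH : Polynomial (MvPolynomial (Fin r) ℂ) :=
    ∑ i, Polynomial.C (MvPolynomial.X i) * (Q (L i)).map MvPolynomial.C with hGH
  have hmapH : ∀ lam : Fin r → ℂ,
      GH.map (MvPolynomial.eval lam) = H lam := by
    intro lam
    rw [hGH, Polynomial.map_sum, hHdef]
    apply Finset.sum_congr rfl
    intro i _
    rw [Polynomial.map_mul, Polynomial.map_C, MvPolynomial.eval_X, Polynomial.map_map]
    congr 1
    rw [show (MvPolynomial.eval lam).comp (MvPolynomial.C) = RingHom.id ℂ from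
      RingHom.ext fun x => MvPolynomial.eval_C x, Polynomial.map_id]
  set Dp : MvPolynomial (Fin r) ℂ :=
    (∑ i, MvPolynomial.X i) * (sylv (b - 1) GH).det with hDp
  have hevalD : ∀ lam : Fin r → ℂ,
      MvPolynomial.eval lam Dp = (∑ i, lam i) * (sylv (b - 1) (H lam)).det := by
    intro lam
    rw [hDp, map_mul, map_sum]
    congr 1
    · simp
    · rw [RingHom.map_det]
      congr 1
      rw [show (MvPolynomial.eval lam).mapMatrix (sylv (b - 1) GH)
          = (sylv (b - 1) GH).map (MvPolynomial.eval lam) from rfl,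
        sylv_map, hmapH]
  have hmain : ∀ lam : Fin r → ℂ, MvPolynomial.eval lam Dp ≠ 0 →
      (B lam / P).natDegree = b - 1 ∧ (B lam / P).roots.toFinset.card = b - 1 := by
    intro lam hne
    rw [hevalD] at hne
    have hs : (∑ i, lam i) ≠ 0 := left_ne_zero_of_mul hne
    have hdet : (sylv (b - 1) (H lam)).det ≠ 0 := right_ne_zero_of_mul hne
    obtain ⟨hdeg, hne0⟩ := hHdeg lam hs
    have hsep := separable_of_det_sylv_ne_zero hdeg hne0 hdet
    rw [hdiv lam]
    refine ⟨hdeg, ?_⟩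
    rw [Multiset.toFinset_card_of_nodup (nodup_roots hsep),
      splits_iff_card_roots.1 (IsAlgClosed.splits _), hdeg]
  have hH0 : H (fun i => if i = (⟨0, hr⟩ : Fin r) then 1 else 0) = Q (L ⟨0, hr⟩) := by
    simp only [hHdef]
    rw [Finset.sum_eq_single (⟨0, hr⟩ : Fin r)]
    · simp
    · intro i _ hi; simp [hi]
    · simp
  have hQsep : (Q (L ⟨0, hr⟩)).Separable := by
    rw [hQ]
    exact separable_prod_X_sub_C_iff'.2 fun x _ y _ hxy => hc hxy
  have hD0 : MvPolynomial.eval (fun i => if i = (⟨0, hr⟩ : Fin r) then 1 else 0) Dp ≠ 0 := by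
    rw [hevalD, hH0]
    have h1 : (∑ i, (if i = (⟨0, hr⟩ : Fin r) then (1:ℂ) else 0)) = 1 := by
      rw [Finset.sum_ite_eq' Finset.univ (⟨0, hr⟩ : Fin r) (fun _ => (1:ℂ))]
      simp
    rw [h1, one_mul]
    exact det_sylv_ne_zero (hQdeg _) (hQmonic _).ne_zero hQsep
  exact ⟨⟨Dp, fun h => hD0 (by rw [h]; simp), hmain⟩,
    hmain _ hD0⟩
end

section
/- Let b ≥ 2 be an integer and let φ_1, …, φ_{b−1} ∈ ℂ be pairwise distinct and nonzero. For μ = (μ_1, …, μ_{b−1}) ∈ ℂ^{b−1} define H_μ(v) = v · Σ_{s=1}^{b−1} μ_s ∏_{j≠s} (v² − φ_j) ∈ ℂ[v]. Then there exists a nonzero polynomial D in b − 1 variables over ℂ such that for every μ with D(μ) ≠ 0, the polynomial H_μ has exactly 2(b−1) − 1 = 2b − 3 distinct roots in ℂ; in particular such μ exist. -/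
open Polynomial Finset Matrix

namespace Stmt3Aux

noncomputable def sylv {R : Type*} [CommRing R] (m : ℕ) (p q : R[X]) :
    Matrix (Fin (2*m-1)) (Fin (2*m-1)) R := fun i k =>
  if (i:ℕ) < m - 1 then
    (if (i:ℕ) ≤ (k:ℕ) then p.coeff ((k:ℕ) - (i:ℕ)) else 0)
  else
    (if (i:ℕ) - (m-1) ≤ (k:ℕ) then q.coeff ((k:ℕ) - ((i:ℕ) - (m-1))) else 0)

lemma sylv_map {R S : Type*} [CommRing R] [CommRing S] (f : R →+* S) (m : ℕ) (p q : R[X]) :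
    (sylv m p q).map f = sylv m (p.map f) (q.map f) := by
  ext i k
  simp only [sylv, Matrix.map_apply, apply_ite f, map_zero, coeff_map]

lemma row_sum {K : Type*} [Field K] (N : ℕ) (r : K[X]) (sh : ℕ) (t : K)
    (hdeg : r.natDegree < N - sh) :
    ∑ k ∈ Finset.range N, (if sh ≤ k then r.coeff (k - sh) else 0) * t ^ k
      = t ^ sh * r.eval t := by
  have hsh : sh ≤ N := by omega
  rw [Finset.range_eq_Ico, ← Finset.sum_Ico_consecutive _ (Nat.zero_le sh) hsh]
  rw [Finset.sum_eq_zero (fun k hk => by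
    rw [if_neg (by simp at hk; omega), zero_mul])]
  rw [zero_add, Finset.sum_Ico_eq_sum_range]
  have : ∀ k ∈ Finset.range (N - sh),
      (if sh ≤ sh + k then r.coeff (sh + k - sh) else 0) * t ^ (sh + k)
        = t ^ sh * (r.coeff k * t ^ k) := by
    intro k hk
    rw [if_pos (Nat.le_add_right _ _), Nat.add_sub_cancel_left, pow_add]
    ring
  rw [Finset.sum_congr rfl this, ← Finset.mul_sum,
    eval_eq_sum_range' hdeg]

lemma sylv_det_eq_zero {K : Type*} [Field K] {m : ℕ} (hm : 1 ≤ m) {p q : K[X]}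
    (hp : p.natDegree ≤ m) (hq : q.natDegree ≤ m - 1) {t : K}
    (hpt : p.eval t = 0) (hqt : q.eval t = 0) : (sylv m p q).det = 0 := by
  rw [← Matrix.exists_mulVec_eq_zero_iff]
  refine ⟨fun k => t ^ (k:ℕ), ?_, ?_⟩
  · intro h
    have h0 : t ^ ((⟨0, by omega⟩ : Fin (2*m-1)):ℕ) = 0 := congrFun h ⟨0, by omega⟩
    simp at h0
  · funext i
    show ∑ k, sylv m p q i k * t ^ (k:ℕ) = 0
    have hsum : ∑ k : Fin (2*m-1), sylv m p q i k * t ^ (k:ℕ)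
        = ∑ k ∈ Finset.range (2*m-1), (if (i:ℕ) < m - 1 then
            (if (i:ℕ) ≤ k then p.coeff (k - (i:ℕ)) else 0)
          else
            (if (i:ℕ) - (m-1) ≤ k then q.coeff (k - ((i:ℕ) - (m-1))) else 0)) * t ^ k := by
      rw [← Fin.sum_univ_eq_sum_range]
      rfl
    rw [hsum]
    by_cases hi : (i:ℕ) < m - 1
    · simp only [if_pos hi]
      rw [row_sum _ _ _ _ (by omega), hpt, mul_zero]
    · simp only [if_neg hi]
      have hi2 : (i:ℕ) - (m-1) ≤ m - 1 := by
        have := i.2; omega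
      rw [row_sum _ _ _ _ (by omega), hqt, mul_zero]


lemma sylv_det_ne_zero' {K : Type*} [Field K] {m : ℕ} {p q : K[X]}
    (hd : p.natDegree = m) (hq : q.natDegree ≤ m - 1) (hcop : IsCoprime p q)
    (sylv : Matrix (Fin (2*m-1)) (Fin (2*m-1)) K)
    (hsylv : ∀ i k, sylv i k = if (i:ℕ) < m - 1 then
      (if (i:ℕ) ≤ (k:ℕ) then p.coeff ((k:ℕ) - (i:ℕ)) else 0)
    else
      (if (i:ℕ) - (m-1) ≤ (k:ℕ) then q.coeff ((k:ℕ) - ((i:ℕ) - (m-1))) else 0)) :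
    sylv.det ≠ 0 := by
  rcases Nat.eq_zero_or_pos m with hm | hm
  · subst hm
    haveI : IsEmpty (Fin (2*0-1)) := ⟨fun i => absurd i.2 (by omega)⟩
    rw [Matrix.det_isEmpty]; exact one_ne_zero
  intro h
  rw [← Matrix.det_transpose] at h
  obtain ⟨w, hw0, hw⟩ := Matrix.exists_mulVec_eq_zero_iff.2 h
  set A : K[X] := ∑ i : Fin (2*m-1), if (i:ℕ) < m-1 then Polynomial.C (w i) * X^(i:ℕ) else 0 with hA
  set B : K[X] := ∑ i : Fin (2*m-1), if (i:ℕ) < m-1 then 0 else Polynomial.C (w i) * X^((i:ℕ)-(m-1)) with hB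
  have hp0 : p ≠ 0 := fun h0 => by simp [h0] at hd; omega
  have term : ∀ (a : K) (n k : ℕ), (Polynomial.C a * X^n * p).coeff k
      = (if n ≤ k then p.coeff (k-n) else 0) * a := by
    intro a n k
    rw [show Polynomial.C a * X^n * p = p * X^n * Polynomial.C a by ring, coeff_mul_C,
      coeff_mul_X_pow']
  have termq : ∀ (a : K) (n k : ℕ), (Polynomial.C a * X^n * q).coeff k
      = (if n ≤ k then q.coeff (k-n) else 0) * a := by
    intro a n k
    rw [show Polynomial.C a * X^n * q = q * X^n * Polynomial.C a by ring, coeff_mul_C,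
      coeff_mul_X_pow']
  have key : ∀ k : Fin (2*m-1), (A * p + B * q).coeff (k:ℕ) = 0 := by
    intro k
    have h1 : (A * p + B * q).coeff (k:ℕ) = (sylvᵀ *ᵥ w) k := by
      rw [coeff_add, hA, hB, Finset.sum_mul, Finset.sum_mul,
        finset_sum_coeff, finset_sum_coeff, ← Finset.sum_add_distrib]
      show _ = ∑ i, sylvᵀ k i * w i
      refine Finset.sum_congr rfl fun i _ => ?_
      rw [Matrix.transpose_apply, hsylv]
      by_cases hi : (i:ℕ) < m - 1
      · simp only [if_pos hi]
        rw [zero_mul, coeff_zero, add_zero, term]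
      · simp only [if_neg hi]
        rw [zero_mul, coeff_zero, zero_add, termq]
    rw [h1, hw, Pi.zero_apply]
  have hAle : A.natDegree ≤ m - 2 := by
    refine natDegree_sum_le_of_forall_le _ _ fun i _ => ?_
    split_ifs with hi
    · exact le_trans (natDegree_C_mul_le _ _) (by rw [natDegree_X_pow]; omega)
    · simp
  have hBle : B.natDegree ≤ m - 1 := by
    refine natDegree_sum_le_of_forall_le _ _ fun i _ => ?_
    split_ifs with hi
    · simp
    · refine le_trans (natDegree_C_mul_le _ _) (by rw [natDegree_X_pow]; have := i.2; omega)
  have hAp : (A * p).natDegree ≤ 2*m - 2 := by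
    rcases Nat.lt_or_ge m 2 with h2 | h2
    · have hAz : A = 0 := Finset.sum_eq_zero fun i _ => if_neg (by omega)
      rw [hAz, zero_mul, natDegree_zero]; omega
    · exact le_trans (natDegree_mul_le (p := A) (q := p)) (by omega)
  have hdegsum : (A * p + B * q).natDegree ≤ 2*m - 2 := by
    refine le_trans (natDegree_add_le _ _) (max_le hAp ?_)
    exact le_trans (natDegree_mul_le (p := B) (q := q)) (by omega)
  have hAB : A * p + B * q = 0 := by
    ext n
    rw [coeff_zero]
    by_cases hn : n < 2*m-1
    · exact key ⟨n, hn⟩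
    · exact coeff_eq_zero_of_natDegree_lt (by omega)
  have hpB : p ∣ B := hcop.dvd_of_dvd_mul_right ⟨-A, by linear_combination hAB⟩
  have hB0 : B = 0 := by
    by_contra hB0
    have := Polynomial.natDegree_le_of_dvd hpB hB0
    omega
  have hA0 : A = 0 := by
    rcases mul_eq_zero.1 (by rw [hB0, zero_mul, add_zero] at hAB; exact hAB) with h | h
    · exact h
    · exact absurd h hp0
  apply hw0
  funext i
  by_cases hi : (i:ℕ) < m-1
  · have : A.coeff (i:ℕ) = w i := by
      rw [hA, finset_sum_coeff]
      rw [Finset.sum_eq_single i]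
      · rw [if_pos hi, coeff_C_mul, coeff_X_pow, if_pos rfl, mul_one]
      · intro i' _ hne
        split_ifs with hi'
        · rw [coeff_C_mul, coeff_X_pow, if_neg (fun hc => hne (Fin.ext hc.symm)), mul_zero]
        · exact coeff_zero _
      · intro hmem; exact absurd (Finset.mem_univ i) hmem
    rw [hA0, coeff_zero] at this
    exact this.symm
  · have : B.coeff ((i:ℕ)-(m-1)) = w i := by
      rw [hB, finset_sum_coeff]
      rw [Finset.sum_eq_single i]
      · rw [if_neg hi, coeff_C_mul, coeff_X_pow, if_pos rfl, mul_one]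
      · intro i' _ hne
        split_ifs with hi'
        · exact coeff_zero _
        · rw [coeff_C_mul, coeff_X_pow,
            if_neg (fun hc => hne (Fin.ext (by omega : (i':ℕ) = (i:ℕ)))), mul_zero]
      · intro hmem; exact absurd (Finset.mem_univ i) hmem
    rw [hB0, coeff_zero] at this
    exact this.symm


end Stmt3Aux

section Main

variable {b : ℕ} (hb : 2 ≤ b) (φ : Fin (b - 1) → ℂ)

noncomputable def Pspec (μ : Fin (b-1) → ℂ) : ℂ[X] :=
  ∑ s, Polynomial.C (μ s) * ∏ j ∈ Finset.univ.erase s, (X - Polynomial.C (φ j))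

noncomputable def Pgen : Polynomial (MvPolynomial (Fin (b-1)) ℂ) :=
  ∑ s, Polynomial.C (MvPolynomial.X s)
    * ∏ j ∈ Finset.univ.erase s, (X - Polynomial.C (MvPolynomial.C (φ j)))

lemma Pgen_map (μ : Fin (b-1) → ℂ) :
    (Pgen φ).map (MvPolynomial.eval μ) = Pspec φ μ := by
  rw [Pgen, Pspec, Polynomial.map_sum]
  refine Finset.sum_congr rfl fun s _ => ?_
  rw [Polynomial.map_mul, Polynomial.map_C, Polynomial.map_prod, MvPolynomial.eval_X]
  congr 1
  refine Finset.prod_congr rfl fun j _ => ?_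
  rw [Polynomial.map_sub, Polynomial.map_X, Polynomial.map_C, MvPolynomial.eval_C]

lemma L_monic (s : Fin (b-1)) :
    (∏ j ∈ Finset.univ.erase s, (X - Polynomial.C (φ j))).Monic :=
  monic_prod_of_monic _ _ fun j _ => monic_X_sub_C _

lemma L_natDegree (s : Fin (b-1)) :
    (∏ j ∈ Finset.univ.erase s, (X - Polynomial.C (φ j))).natDegree = b - 2 := by
  rw [natDegree_prod_of_monic _ _ fun j _ => monic_X_sub_C _]
  simp only [natDegree_X_sub_C, Finset.sum_const, smul_eq_mul, mul_one]
  rw [Finset.card_erase_of_mem (Finset.mem_univ s), Finset.card_univ, Fintype.card_fin]; omega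

lemma Pspec_coeff (μ : Fin (b-1) → ℂ) : (Pspec φ μ).coeff (b-2) = ∑ s, μ s := by
  rw [Pspec, finset_sum_coeff]
  refine Finset.sum_congr rfl fun s _ => ?_
  rw [coeff_C_mul, ← L_natDegree φ s, Monic.coeff_natDegree (L_monic φ s), mul_one]

lemma Pspec_natDegree_le (μ : Fin (b-1) → ℂ) : (Pspec φ μ).natDegree ≤ b - 2 :=
  natDegree_sum_le_of_forall_le _ _ fun s _ =>
    le_trans (natDegree_C_mul_le _ _) (L_natDegree φ s).le

lemma Pspec_eval (μ : Fin (b-1) → ℂ) (z : ℂ) :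
    (Pspec φ μ).eval z = ∑ s, μ s * ∏ j ∈ Finset.univ.erase s, (z - φ j) := by
  rw [Pspec, eval_finset_sum]
  refine Finset.sum_congr rfl fun s _ => ?_
  rw [eval_mul, eval_C, eval_prod]
  congr 1
  exact Finset.prod_congr rfl fun j _ => by rw [eval_sub, eval_X, eval_C]

lemma Qspec_coeff (μ : Fin (b-1) → ℂ) :
    (∑ s, Polynomial.C (μ s) * ∏ j ∈ Finset.univ.erase s,
      (X^2 - Polynomial.C (φ j))).coeff (2*(b-2)) = ∑ s, μ s := by
  rw [finset_sum_coeff]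
  refine Finset.sum_congr rfl fun s _ => ?_
  have hmon : (∏ j ∈ Finset.univ.erase s, (X^2 - Polynomial.C (φ j))).Monic :=
    monic_prod_of_monic _ _ fun j _ => monic_X_pow_sub_C _ (by norm_num)
  have hdeg : (∏ j ∈ Finset.univ.erase s, (X^2 - Polynomial.C (φ j))).natDegree = 2*(b-2) := by
    rw [natDegree_prod_of_monic _ _ fun j _ => monic_X_pow_sub_C _ (by norm_num)]
    simp only [natDegree_X_pow_sub_C, Finset.sum_const, smul_eq_mul]
    rw [Finset.card_erase_of_mem (Finset.mem_univ s), Finset.card_univ, Fintype.card_fin]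
    omega
  rw [coeff_C_mul, ← hdeg, Monic.coeff_natDegree hmon, mul_one]

lemma key_count (hb : 2 ≤ b) (μ : Fin (b-1) → ℂ) (hc : (∑ s, μ s) ≠ 0)
    (hz : (Pspec φ μ).eval 0 ≠ 0)
    (hdet : (Stmt3Aux.sylv (b-2) (Pspec φ μ) (derivative (Pspec φ μ))).det ≠ 0)
    (Hμ : ℂ[X]) (hHμ : Hμ = X * ∑ s, Polynomial.C (μ s) *
      ∏ j ∈ Finset.univ.erase s, (X^2 - Polynomial.C (φ j))) :
    Hμ.roots.toFinset.card = 2*b - 3 := by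
  set m := b - 2 with hmdef
  set p := Pspec φ μ with hpdef
  have hpne : p ≠ 0 := fun h0 => hc (by rw [← Pspec_coeff φ μ, ← hpdef, h0, coeff_zero])
  have hdeg : p.natDegree = m := le_antisymm (Pspec_natDegree_le φ μ)
    (le_natDegree_of_ne_zero (fun h0 => hc (by rw [← Pspec_coeff φ μ, ← hpdef, h0])))
  -- squarefreeness
  have hsq : Squarefree p := by
    intro x hx
    rcases Nat.eq_zero_or_pos x.natDegree with hx0 | hx0
    · have hxC : x = Polynomial.C (x.coeff 0) := eq_C_of_natDegree_eq_zero hx0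
      have hxne : x ≠ 0 := fun h0 => hpne (by
        simpa [h0] using hx)
      rw [hxC]
      refine isUnit_C.2 (Ne.isUnit fun h0 => hxne (by rw [hxC, h0, map_zero]))
    · obtain ⟨t, ht⟩ := Complex.exists_root (natDegree_pos_iff_degree_pos.1 hx0)
      have hXt : (X - Polynomial.C t) * (X - Polynomial.C t) ∣ p :=
        dvd_trans (mul_dvd_mul (dvd_iff_isRoot.2 ht) (dvd_iff_isRoot.2 ht)) hx
      have h2m : 2 ≤ m := by
        have h1 := Polynomial.natDegree_le_of_dvd hXt hpne
        rw [hdeg] at h1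
        rwa [natDegree_mul (X_sub_C_ne_zero t) (X_sub_C_ne_zero t), natDegree_X_sub_C] at h1
      obtain ⟨h, hh⟩ := hXt
      have hpt : p.eval t = 0 := by rw [hh]; simp
      have hqt : (derivative p).eval t = 0 := by
        rw [hh, derivative_mul, derivative_mul]
        simp
      exact absurd (Stmt3Aux.sylv_det_eq_zero (by omega) hdeg.le
        (le_trans (natDegree_derivative_le p) (by omega)) hpt hqt) hdet
  have hsep : p.Separable := (PerfectField.separable_iff_squarefree).2 hsq
  have hnodup : p.roots.Nodup := nodup_roots hsep
  have hcard_roots : p.roots.toFinset.card = m := by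
    rw [Multiset.toFinset_card_of_nodup hnodup]
    have hsp := (IsAlgClosed.splits p).natDegree_eq_card_roots
    rw [← hsp, hdeg]
  have h0p : ∀ t ∈ p.roots.toFinset, t ≠ 0 := by
    intro t ht h0
    apply hz
    have h1 := (mem_roots hpne).1 (Multiset.mem_toFinset.1 ht)
    rw [IsRoot.def] at h1
    exact h0 ▸ h1
  have hHne : Hμ ≠ 0 := by
    rw [hHμ]
    refine mul_ne_zero X_ne_zero fun h0 => hc ?_
    rw [← Qspec_coeff φ μ, h0, coeff_zero]
  have hevalH : ∀ z : ℂ, Hμ.eval z = z * p.eval (z^2) := by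
    intro z
    rw [hHμ, eval_mul, eval_X, hpdef, Pspec_eval, eval_finset_sum]
    congr 1
    refine Finset.sum_congr rfl fun s _ => ?_
    rw [eval_mul, eval_C, eval_prod]
    congr 1
    refine Finset.prod_congr rfl fun j _ => ?_
    rw [eval_sub, eval_pow, eval_X, eval_C]
  set e : ℂ → ℂ := fun t => Complex.exp (Complex.log t / 2) with hedef
  have hene : ∀ t, e t ≠ 0 := fun t => Complex.exp_ne_zero _
  have he : ∀ t ∈ p.roots.toFinset, (e t)^2 = t := by
    intro t ht
    rw [hedef]
    show Complex.exp (Complex.log t / 2) ^ 2 = t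
    rw [sq, ← Complex.exp_add,
      show Complex.log t / 2 + Complex.log t / 2 = Complex.log t by ring]
    exact Complex.exp_log (h0p t ht)
  set S : Finset ℂ := insert 0 (p.roots.toFinset.biUnion fun t => {e t, -(e t)}) with hSdef
  have hmem2 : ∀ t ∈ p.roots.toFinset, ∀ z ∈ ({e t, -(e t)} : Finset ℂ), z^2 = t := by
    intro t ht z hzmem
    rcases Finset.mem_insert.1 hzmem with rfl | hz1
    · exact he t ht
    · rw [Finset.mem_singleton.1 hz1, neg_sq]
      exact he t ht
  have hSeq : Hμ.roots.toFinset = S := by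
    ext z
    rw [Multiset.mem_toFinset, mem_roots hHne, hSdef]
    rw [Finset.mem_insert]
    constructor
    · intro hzr
      rw [IsRoot.def, hevalH] at hzr
      rcases mul_eq_zero.1 hzr with h | h
      · exact Or.inl h
      · right
        have hz2 : z^2 ∈ p.roots.toFinset := by
          rw [Multiset.mem_toFinset, mem_roots hpne]
          exact h
        have h2 : (e (z^2))^2 = z^2 := he _ hz2
        have hfac : (z - e (z^2)) * (z + e (z^2)) = 0 := by linear_combination -h2
        refine Finset.mem_biUnion.2 ⟨z^2, hz2, ?_⟩
        rcases mul_eq_zero.1 hfac with h' | h'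
        · rw [Finset.mem_insert]
          exact Or.inl (sub_eq_zero.1 h')
        · rw [Finset.mem_insert, Finset.mem_singleton]
          exact Or.inr (eq_neg_of_add_eq_zero_left h')
    · intro hmem
      rw [IsRoot.def, hevalH]
      rcases hmem with rfl | hmem
      · rw [zero_mul]
      · obtain ⟨t, ht, hz⟩ := Finset.mem_biUnion.1 hmem
        rw [hmem2 t ht z hz]
        have h1 := (mem_roots hpne).1 (Multiset.mem_toFinset.1 ht)
        rw [IsRoot.def] at h1
        rw [h1, mul_zero]
  have hpair : ∀ t ∈ p.roots.toFinset, ({e t, -(e t)} : Finset ℂ).card = 2 := by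
    intro t ht
    rw [Finset.card_insert_of_notMem, Finset.card_singleton]
    intro hmem
    rw [Finset.mem_singleton] at hmem
    have h2 : (2:ℂ) * e t = 0 := by linear_combination hmem
    rcases mul_eq_zero.1 h2 with h' | h'
    · norm_num at h'
    · exact hene t h'
  have hbcard : (p.roots.toFinset.biUnion fun t => {e t, -(e t)}).card = 2*m := by
    rw [Finset.card_biUnion]
    · rw [Finset.sum_congr rfl hpair, Finset.sum_const, hcard_roots, smul_eq_mul]
      omega
    · intro x hx y hy hxy
      rw [Function.onFun, Finset.disjoint_left]
      intro z hzx hzy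
      exact hxy (by rw [← hmem2 x hx z hzx, hmem2 y hy z hzy])
  have h0S : (0:ℂ) ∉ p.roots.toFinset.biUnion fun t => {e t, -(e t)} := by
    intro hmem
    obtain ⟨t, ht, hz⟩ := Finset.mem_biUnion.1 hmem
    have h1 := hmem2 t ht 0 hz
    rw [zero_pow (by norm_num)] at h1
    exact h0p t ht h1.symm
  rw [hSeq, hSdef, Finset.card_insert_of_notMem h0S, hbcard]
  omega



noncomputable def Dpoly : MvPolynomial (Fin (b-1)) ℂ :=
  (∑ s, MvPolynomial.X s)
  * (∑ s, MvPolynomial.C (∏ j ∈ Finset.univ.erase s, (-φ j)) * MvPolynomial.X s)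
  * (Stmt3Aux.sylv (b-2) (Pgen φ) (derivative (Pgen φ))).det

lemma eval_Dpoly (μ : Fin (b-1) → ℂ) :
    MvPolynomial.eval μ (Dpoly φ) = (∑ s, μ s)
      * (∑ s, (∏ j ∈ Finset.univ.erase s, (-φ j)) * μ s)
      * (Stmt3Aux.sylv (b-2) (Pspec φ μ) (derivative (Pspec φ μ))).det := by
  rw [Dpoly, _root_.map_mul, _root_.map_mul]
  congr 1
  · congr 1
    · rw [_root_.map_sum]
      exact Finset.sum_congr rfl fun s _ => MvPolynomial.eval_X _
    · rw [_root_.map_sum]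
      refine Finset.sum_congr rfl fun s _ => ?_
      rw [_root_.map_mul, MvPolynomial.eval_C, MvPolynomial.eval_X]
  · rw [RingHom.map_det]
    congr 1
    rw [RingHom.mapMatrix_apply, Stmt3Aux.sylv_map, ← derivative_map, Pgen_map]

lemma exists_good (hb : 2 ≤ b) (hinj : Function.Injective φ) (hne : ∀ j, φ j ≠ 0) :
    ∃ μ, MvPolynomial.eval μ (Dpoly φ) ≠ 0 := by
  have hpos : 0 < b - 1 := by omega
  set s₀ : Fin (b-1) := ⟨0, hpos⟩ with hs₀
  set μ : Fin (b-1) → ℂ := fun s => if s = s₀ then 1 else 0 with hμ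
  refine ⟨μ, ?_⟩
  have hPμ : Pspec φ μ = ∏ j ∈ Finset.univ.erase s₀, (X - Polynomial.C (φ j)) := by
    rw [Pspec, Finset.sum_eq_single s₀]
    · rw [hμ]; simp
    · intro s _ hs
      rw [hμ]
      simp [hs]
    · intro h
      exact absurd (Finset.mem_univ s₀) h
  rw [eval_Dpoly]
  have hdegμ : (Pspec φ μ).natDegree = b - 2 := by rw [hPμ]; exact L_natDegree φ s₀
  refine mul_ne_zero (mul_ne_zero ?_ ?_) ?_
  · rw [hμ]
    simp
  · rw [hμ]
    rw [Finset.sum_eq_single s₀]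
    · simp only [eq_self_iff_true, if_true, mul_one]
      exact Finset.prod_ne_zero_iff.2 fun j _ => neg_ne_zero.2 (hne j)
    · intro s _ hs
      simp [hs]
    · intro h
      exact absurd (Finset.mem_univ s₀) h
  · have hsep : (∏ j ∈ Finset.univ.erase s₀, (X - Polynomial.C (φ j))).Separable :=
      (separable_prod_X_sub_C_iff').2 fun i _ j _ h => hinj h
    refine Stmt3Aux.sylv_det_ne_zero' (m := b-2) hdegμ ?_ ?_ _ (fun i k => rfl)
    · exact le_trans (natDegree_derivative_le _) (by omega)
    · rw [hPμ]
      exact hsep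

end Main


/-- For pairwise distinct nonzero `φ_1, …, φ_{b−1}` and
`H_μ(v) = v · Σ_s μ_s ∏_{j≠s} (v² − φ_j)`, there is a nonzero polynomial `D` in
the `b − 1` variables `μ` such that whenever `D(μ) ≠ 0` the polynomial `H_μ` has
exactly `2b − 3` distinct roots in `ℂ`; in particular such `μ` exist. -/
theorem stmt3 (b : ℕ) (hb : 2 ≤ b) (φ : Fin (b - 1) → ℂ)
    (hinj : Function.Injective φ) (hne : ∀ j, φ j ≠ 0)
    (H : (Fin (b - 1) → ℂ) → Polynomial ℂ)
    (hH : ∀ μ : Fin (b - 1) → ℂ, H μ =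
      X * ∑ s, Polynomial.C (μ s) *
        ∏ j ∈ Finset.univ.erase s, (X ^ 2 - Polynomial.C (φ j))) :
    (∃ D : MvPolynomial (Fin (b - 1)) ℂ, D ≠ 0 ∧
      ∀ μ : Fin (b - 1) → ℂ, MvPolynomial.eval μ D ≠ 0 →
        (H μ).roots.toFinset.card = 2 * b - 3) ∧
    ∃ μ : Fin (b - 1) → ℂ, (H μ).roots.toFinset.card = 2 * b - 3 := by

  obtain ⟨μ₀, hμ₀⟩ := exists_good φ hb hinj hne
  have hDne : Dpoly φ ≠ 0 := fun h0 => hμ₀ (by rw [h0, map_zero])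
  have hgood : ∀ μ, MvPolynomial.eval μ (Dpoly φ) ≠ 0 →
      (H μ).roots.toFinset.card = 2*b-3 := by
    intro μ hD
    rw [eval_Dpoly] at hD
    have hc : (∑ s, μ s) ≠ 0 := fun h => hD (by rw [h, zero_mul, zero_mul])
    have hz2 : (∑ s, (∏ j ∈ Finset.univ.erase s, (-φ j)) * μ s) ≠ 0 :=
      fun h => hD (by rw [h, mul_zero, zero_mul])
    have hdet : (Stmt3Aux.sylv (b-2) (Pspec φ μ) (derivative (Pspec φ μ))).det ≠ 0 :=
      fun h => hD (by rw [h, mul_zero])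
    have hz : (Pspec φ μ).eval 0 ≠ 0 := by
      have heq : (∑ s, μ s * ∏ j ∈ Finset.univ.erase s, ((0:ℂ) - φ j))
          = ∑ s, (∏ j ∈ Finset.univ.erase s, (-φ j)) * μ s := by
        refine Finset.sum_congr rfl fun s _ => ?_
        rw [mul_comm]
        congr 1
        exact Finset.prod_congr rfl fun j _ => by rw [zero_sub]
      rw [Pspec_eval, heq]
      exact hz2
    exact key_count φ hb μ hc hz hdet (H μ) (hH μ)
  exact ⟨⟨Dpoly φ, hDne, hgood⟩, ⟨μ₀, hgood μ₀ hμ₀⟩⟩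
end

section
/- Let μ ∈ ℝ with μ ≥ 1, let h ≥ 2 be an integer, let k ∈ ℝ, and set ε = (μh − 1)/(h − 1). Suppose (i₀, j₀) and (i₁, j₁) are pairs of integers with 0 ≤ j₀ < j₁, such that i₀ + ε·j₀ ≤ k − 1 and i₁ + μ·j₁ ≥ k − μ. Then i₀ − i₁ < 2μ·(j₁ − j₀). -/
/-- the Newton-polygon inequality from the finiteness theorem:
if `μ ≥ 1`, `h ≥ 2`, `ε = (μh − 1)/(h − 1)`, `0 ≤ j₀ < j₁`,
`i₀ + ε·j₀ ≤ k − 1` and `i₁ + μ·j₁ ≥ k − μ`, then `i₀ − i₁ < 2μ·(j₁ − j₀)`. -/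
theorem stmt7 (μ : ℝ) (hμ : 1 ≤ μ) (h : ℕ) (hh : 2 ≤ h) (k : ℝ)
    (ε : ℝ) (hε : ε = (μ * (h : ℝ) - 1) / ((h : ℝ) - 1))
    (i₀ j₀ i₁ j₁ : ℤ) (hj₀ : 0 ≤ j₀) (hj : j₀ < j₁)
    (h₀ : (i₀ : ℝ) + ε * (j₀ : ℝ) ≤ k - 1)
    (h₁ : (i₁ : ℝ) + μ * (j₁ : ℝ) ≥ k - μ) :
    (i₀ : ℝ) - (i₁ : ℝ) < 2 * μ * ((j₁ : ℝ) - (j₀ : ℝ)) := by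
  have hd : (1:ℝ) ≤ (h:ℝ) - 1 := by
    have : (2:ℝ) ≤ (h:ℝ) := by exact_mod_cast hh
    linarith
  have hμε : μ ≤ ε := by
    rw [hε, le_div_iff₀ (by linarith)]
    nlinarith
  have hj0 : (0:ℝ) ≤ (j₀:ℝ) := by exact_mod_cast hj₀
  have hjj : (j₀:ℝ) + 1 ≤ (j₁:ℝ) := by exact_mod_cast hj
  nlinarith [mul_le_mul_of_nonneg_right hμε hj0]
end

section
/- Let f = y·(y − x²)·(2y − (1 + i√3)·x²) ∈ ℂ[x, y]. Then for all but finitely many points [a : b] of the complex projective line, the polar a·∂f/∂x + b·∂f/∂y, regarded as an element of the formal power series ring ℂ⟦x, y⟧, is irreducible. -/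
open MvPolynomial

noncomputable def cf (G : MvPowerSeries (Fin 2) ℂ) (i j : ℕ) : ℂ :=
  MvPowerSeries.coeff (Finsupp.single (0 : Fin 2) i + Finsupp.single 1 j) G

lemma fin2_decomp (g : Fin 2 →₀ ℕ) : g = Finsupp.single 0 (g 0) + Finsupp.single 1 (g 1) := by
  ext a; fin_cases a <;> simp [Finsupp.single_apply]

lemma fs_eq_iff {i j k l : ℕ} :
    (Finsupp.single (0:Fin 2) i + Finsupp.single 1 j) = Finsupp.single 0 k + Finsupp.single 1 l ↔
      i = k ∧ j = l := by
  constructor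
  · intro h
    have h0 := DFunLike.congr_fun h 0
    have h1 := DFunLike.congr_fun h 1
    simp [Finsupp.single_apply] at h0 h1
    exact ⟨h0, h1⟩
  · rintro ⟨rfl, rfl⟩; rfl

lemma cf_mul (G H : MvPowerSeries (Fin 2) ℂ) (i j : ℕ) :
    cf (G*H) i j = ∑ u ∈ Finset.range (i+1), ∑ v ∈ Finset.range (j+1),
      cf G u v * cf H (i-u) (j-v) := by
  rw [cf, MvPowerSeries.coeff_mul]
  rw [← Finset.sum_product']
  refine Finset.sum_nbij' (fun q => ((q.1 0, q.1 1) : ℕ × ℕ))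
    (fun p => (Finsupp.single 0 p.1 + Finsupp.single 1 p.2,
      Finsupp.single 0 (i-p.1) + Finsupp.single 1 (j-p.2))) ?_ ?_ ?_ ?_ ?_
  · intro q hq
    rw [Finset.HasAntidiagonal.mem_antidiagonal] at hq
    have h0 := DFunLike.congr_fun hq 0
    have h1 := DFunLike.congr_fun hq 1
    simp [Finsupp.single_apply] at h0 h1
    simp only [Finset.mem_product, Finset.mem_range]
    omega
  · intro p hp
    simp only [Finset.mem_product, Finset.mem_range] at hp
    rw [Finset.HasAntidiagonal.mem_antidiagonal]
    ext a; fin_cases a <;> simp [Finsupp.single_apply] <;> omega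
  · intro q hq
    rw [Finset.HasAntidiagonal.mem_antidiagonal] at hq
    have h0 := DFunLike.congr_fun hq 0
    have h1 := DFunLike.congr_fun hq 1
    simp [Finsupp.single_apply] at h0 h1
    have e1 : Finsupp.single (0 : Fin 2) (q.1 0) + Finsupp.single 1 (q.1 1) = q.1 :=
      (fin2_decomp _).symm
    have e2 : Finsupp.single (0 : Fin 2) (i - q.1 0) + Finsupp.single 1 (j - q.1 1) = q.2 := by
      ext a; fin_cases a <;> simp [Finsupp.single_apply] <;> omega
    exact Prod.ext e1 e2
  · intro p hp
    simp only [Finset.mem_product, Finset.mem_range] at hp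
    simp [Finsupp.single_apply]
  · intro q hq
    rw [Finset.HasAntidiagonal.mem_antidiagonal] at hq
    have h0 := DFunLike.congr_fun hq 0
    have h1 := DFunLike.congr_fun hq 1
    simp [Finsupp.single_apply] at h0 h1
    have e1 : q.1 = Finsupp.single (0 : Fin 2) (q.1 0) + Finsupp.single 1 (q.1 1) :=
      fin2_decomp _
    have e2 : q.2 = Finsupp.single (0 : Fin 2) (i - q.1 0) + Finsupp.single 1 (j - q.1 1) := by
      ext a; fin_cases a <;> simp [Finsupp.single_apply] <;> omega
    show _ = cf G (q.1 0) (q.1 1) * cf H (i - q.1 0) (j - q.1 1)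
    rw [cf, cf]
    conv_lhs => rw [e1, e2]

lemma cf_monomial (k : ℂ) (m n i j : ℕ) :
    cf ((MvPolynomial.C k * MvPolynomial.X 0 ^ m * MvPolynomial.X 1 ^ n :
        MvPolynomial (Fin 2) ℂ) : MvPowerSeries (Fin 2) ℂ) i j
      = if m = i ∧ n = j then k else 0 := by
  rw [cf, MvPolynomial.coeff_coe]
  rw [MvPolynomial.X_pow_eq_monomial, MvPolynomial.X_pow_eq_monomial, MvPolynomial.C_apply,
    MvPolynomial.monomial_mul, MvPolynomial.monomial_mul]
  rw [MvPolynomial.coeff_monomial]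
  simp only [zero_add, mul_one]
  by_cases h : m = i ∧ n = j
  · rw [if_pos, if_pos h]; exact fs_eq_iff.mpr ⟨h.1, h.2⟩
  · rw [if_neg, if_neg h]; intro hc; exact h (fs_eq_iff.mp hc)

lemma cf_add (A B : MvPowerSeries (Fin 2) ℂ) (i j : ℕ) :
    cf (A + B) i j = cf A i j + cf B i j := by
  simp [cf]

lemma key_irred (c a b : ℂ) (hcsq : c^2 = 2*c - 4) (hc2 : c + 2 ≠ 0) (hcne : c ≠ 0)
    (ha : a ≠ 0) (hb : b ≠ 0)
    (F : MvPowerSeries (Fin 2) ℂ)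
    (hF : ∀ i j : ℕ, cf F i j =
      (if 1 = i ∧ 2 = j then -2*(c+2)*a else 0) + (if 3 = i ∧ 1 = j then 4*c*a else 0)
      + (if 0 = i ∧ 2 = j then 6*b else 0) + (if 2 = i ∧ 1 = j then -2*(c+2)*b else 0)
      + (if 4 = i ∧ 0 = j then c*b else 0)) :
    Irreducible F := by
  have h6 : (c+2)^2 = 6*c := by linear_combination hcsq
  constructor
  · rw [MvPowerSeries.isUnit_iff_constantCoeff]
    have h00 : (MvPowerSeries.constantCoeff F : ℂ) = cf F 0 0 := by
      rw [cf]; norm_num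
    rw [h00, hF]
    norm_num
  · rintro G H rfl
    by_contra hcon
    push_neg at hcon
    obtain ⟨hG, hH⟩ := hcon
    have hg00 : cf G 0 0 = 0 := by
      by_contra h
      exact hG (MvPowerSeries.isUnit_iff_constantCoeff.mpr (by
        have : (MvPowerSeries.constantCoeff G : ℂ) = cf G 0 0 := by rw [cf]; norm_num
        rw [this]; exact isUnit_iff_ne_zero.mpr h))
    have hh00 : cf H 0 0 = 0 := by
      by_contra h
      exact hH (MvPowerSeries.isUnit_iff_constantCoeff.mpr (by
        have : (MvPowerSeries.constantCoeff H : ℂ) = cf H 0 0 := by rw [cf]; norm_num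
        rw [this]; exact isUnit_iff_ne_zero.mpr h))
    -- the coefficient equations
    have E := fun i j => (hF i j).symm.trans (cf_mul G H i j)
    have e20 := E 2 0
    have e11 := E 1 1
    have e02 := E 0 2
    have e21 := E 2 1
    have e40 := E 4 0
    have e12 := E 1 2
    have e31 := E 3 1
    have e50 := E 5 0
    simp only [Finset.sum_range_succ, Finset.sum_range_zero] at e20 e11 e02 e21 e40 e12 e31 e50
    norm_num [hg00, hh00] at e20 e11 e02 e21 e40 e12 e31 e50
    -- leading coefficients are nonzero
    have hg01 : cf G 0 1 ≠ 0 := by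
      intro h; rw [h] at e02; simp at e02; exact hb (by simpa using e02)
    have hh01 : cf H 0 1 ≠ 0 := by
      intro h; rw [h] at e02; simp at e02; exact hb (by simpa using e02)
    -- the weight-one coefficients vanish
    have h10 : cf G 1 0 = 0 ∧ cf H 1 0 = 0 := by
      rcases e20 with h | h
      · refine ⟨h, ?_⟩
        rw [h] at e11; simp at e11
        rcases e11 with h' | h'
        · exact absurd h' hg01
        · exact h'
      · refine ⟨?_, h⟩
        rw [h] at e11; simp at e11
        rcases e11 with h' | h'
        · exact h'
        · exact absurd h' hh01
    rw [h10.1, h10.2] at e21 e40 e12 e31 e50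
    simp only [zero_mul, mul_zero, add_zero, zero_add] at e21 e40 e12 e31 e50
    -- the quadratic leading form is a perfect square
    have hD : (6 * cf G 2 0 + (c+2) * cf G 0 1) * (6 * cf H 2 0 + (c+2) * cf H 0 1) = 0 := by
      linear_combination (-36 : ℂ)*e40 - 6*(c+2)*e21 - (c+2)^2*e02 - 6*b*h6
    have hgh : 6 * cf G 2 0 + (c+2) * cf G 0 1 = 0 ∧ 6 * cf H 2 0 + (c+2) * cf H 0 1 = 0 := by
      rcases mul_eq_zero.mp hD with h | h
      · refine ⟨h, ?_⟩
        have h2 : cf G 0 1 * (6 * cf H 2 0 + (c+2) * cf H 0 1) = 0 := by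
          linear_combination (-6 : ℂ)*e21 - 2*(c+2)*e02 - cf H 0 1 * h
        rcases mul_eq_zero.mp h2 with h' | h'
        · exact absurd h' hg01
        · exact h'
      · refine ⟨?_, h⟩
        have h2 : cf H 0 1 * (6 * cf G 2 0 + (c+2) * cf G 0 1) = 0 := by
          linear_combination (-6 : ℂ)*e21 - 2*(c+2)*e02 - cf G 0 1 * h
        rcases mul_eq_zero.mp h2 with h' | h'
        · exact absurd h' hh01
        · exact h'
    obtain ⟨hg2, hh2⟩ := hgh
    -- weight-five analysis
    have hS3' : (c+2) * (cf G 0 1 * cf H 3 0 + cf G 3 0 * cf H 0 1) = 0 := by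
      linear_combination cf H 3 0 * hg2 + cf G 3 0 * hh2 + 6*e50
    have hS3 : cf G 0 1 * cf H 3 0 + cf G 3 0 * cf H 0 1 = 0 := by
      rcases mul_eq_zero.mp hS3' with h | h
      · exact absurd h hc2
      · exact h
    have hfin : 2*c*a = 0 := by
      linear_combination e31 + hS3 + (cf G 1 1/6)*hh2 + (cf H 1 1/6)*hg2 + ((c+2)/6)*e12
        + (a/3)*h6
    rcases mul_eq_zero.mp hfin with h | h
    · rcases mul_eq_zero.mp h with h' | h'
      · norm_num at h'
      · exact hcne h'
    · exact ha h

/-- for `f = y(y − x²)(2y − (1 + i√3)x²)`, for all but finitely many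
directions `[a : b]` of the projective line, the polar `a·∂f/∂x + b·∂f/∂y` is
irreducible as a formal power series in two variables. -/
theorem stmt8 (f : MvPolynomial (Fin 2) ℂ)
    (hf : f = MvPolynomial.X 1 * (MvPolynomial.X 1 - MvPolynomial.X 0 ^ 2) *
      (2 * MvPolynomial.X 1 -
        MvPolynomial.C (1 + Complex.I * (Real.sqrt 3 : ℂ)) * MvPolynomial.X 0 ^ 2)) :
    ∃ S : Set (Projectivization ℂ (Fin 2 → ℂ)), S.Finite ∧
      ∀ (a b : ℂ) (h : ![a, b] ≠ 0), Projectivization.mk ℂ ![a, b] h ∉ S →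
        Irreducible ((MvPolynomial.coeToMvPowerSeries.ringHom
          (MvPolynomial.C a * MvPolynomial.pderiv 0 f +
            MvPolynomial.C b * MvPolynomial.pderiv 1 f) : MvPowerSeries (Fin 2) ℂ)) := by
  set c : ℂ := 1 + Complex.I * (Real.sqrt 3 : ℂ) with hc
  have hI3 : (Complex.I * (Real.sqrt 3 : ℂ))^2 = -3 := by
    rw [mul_pow, Complex.I_sq, ← Complex.ofReal_pow, Real.sq_sqrt (by norm_num : (3:ℝ) ≥ 0)]
    norm_num
  have hcsq : c^2 = 2*c - 4 := by rw [hc]; ring_nf; linear_combination hI3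
  have him : c.im = Real.sqrt 3 := by simp [hc]
  have hs3 : Real.sqrt 3 ≠ 0 := by positivity
  have hcne : c ≠ 0 := fun h => hs3 (by rw [← him, h]; simp)
  have hc2 : c + 2 ≠ 0 := fun h => hs3 (by
    have := congrArg Complex.im h
    simpa [him] using this)
  have hne1 : (![(1:ℂ), 0] : Fin 2 → ℂ) ≠ 0 := by
    intro h; have := congrFun h 0; simp at this
  have hne2 : (![(0:ℂ), 1] : Fin 2 → ℂ) ≠ 0 := by
    intro h; have := congrFun h 1; simp at this
  refine ⟨{Projectivization.mk ℂ ![1,0] hne1, Projectivization.mk ℂ ![0,1] hne2},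
    (Set.finite_singleton _).insert _, ?_⟩
  intro a b hab hS
  have ha : a ≠ 0 := by
    rintro rfl
    have hb : b ≠ 0 := by
      intro hb; apply hab; rw [hb]; funext i; fin_cases i <;> simp
    apply hS
    simp only [Set.mem_insert_iff, Set.mem_singleton_iff]
    right
    rw [Projectivization.mk_eq_mk_iff']
    exact ⟨b, by funext i; fin_cases i <;> simp⟩
  have hb : b ≠ 0 := by
    rintro rfl
    apply hS
    simp only [Set.mem_insert_iff, Set.mem_singleton_iff]
    left
    rw [Projectivization.mk_eq_mk_iff']
    exact ⟨a, by funext i; fin_cases i <;> simp⟩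
  apply key_irred c a b hcsq hc2 hcne ha hb
  -- coefficient computation
  have h0 : MvPolynomial.pderiv (0 : Fin 2) f =
      C (-2*(c+2)) * X 0 * X 1^2 + C (4*c) * X 0^3 * X 1 := by
    rw [hf]
    simp [pderiv_mul, pderiv_X_self, pderiv_X_of_ne,
      show (2:MvPolynomial (Fin 2) ℂ) = C 2 from (map_ofNat C 2).symm, pderiv_C]
    simp only [map_mul, map_add, map_neg, map_ofNat]
    ring
  have h1 : MvPolynomial.pderiv (1 : Fin 2) f =
      C 6 * X 1^2 + C (-2*(c+2)) * X 0^2 * X 1 + C c * X 0^4 := by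
    rw [hf]
    simp [pderiv_mul, pderiv_X_self, pderiv_X_of_ne,
      show (2:MvPolynomial (Fin 2) ℂ) = C 2 from (map_ofNat C 2).symm, pderiv_C]
    simp only [map_mul, map_add, map_neg, map_ofNat]
    ring
  have hP : MvPolynomial.C a * MvPolynomial.pderiv 0 f + MvPolynomial.C b * MvPolynomial.pderiv 1 f
      = C (-2*(c+2)*a) * X 0 ^ 1 * X 1 ^ 2 + C (4*c*a) * X 0 ^ 3 * X 1 ^ 1
        + (C (6*b) * X 0 ^ 0 * X 1 ^ 2 + C (-2*(c+2)*b) * X 0 ^ 2 * X 1 ^ 1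
        + C (c*b) * X 0 ^ 4 * X 1 ^ 0) := by
    rw [h0, h1]
    simp only [map_mul, map_add, map_neg, map_ofNat]
    ring
  intro i j
  rw [hP]
  rw [MvPolynomial.coeToMvPowerSeries.ringHom_apply]
  push_cast only [MvPolynomial.coe_add]
  rw [cf_add, cf_add, cf_add, cf_add]
  rw [cf_monomial, cf_monomial, cf_monomial, cf_monomial, cf_monomial]
  ring
end

section
/- Let g = y³ − x⁴y ∈ ℂ[x, y] (so g = y(y − x²)(y + x²)). For every (a, b) ∈ ℂ² with b ≠ 0, there exist formal power series η₁, η₂ ∈ ℂ⟦x⟧ such that, as polynomials in y with coefficients in ℂ⟦x⟧, a·∂g/∂x + b·∂g/∂y = 3b·(y − η₁)·(y − η₂), each of η₁ and η₂ has order exactly 2, and the power series η₁ − η₂ has order exactly 2. -/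
open PowerSeries Finset

noncomputable def sqAux (c : ℂ) (f : ℕ → ℂ) : ℕ → ℂ
  | 0 => c
  | (n+1) => (f (n+1) - ∑ i : Fin n, sqAux c f (i+1) * sqAux c f (n-i)) / (2*c)
  decreasing_by all_goals omega

lemma sqAux_zero (c : ℂ) (f : ℕ → ℂ) : sqAux c f 0 = c := by rw [sqAux]

lemma sq_sqAux (c : ℂ) (hc : c ≠ 0) (f : ℕ → ℂ) (h0 : c * c = f 0) :
    PowerSeries.mk (sqAux c f) * PowerSeries.mk (sqAux c f) = PowerSeries.mk f := by
  ext n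
  rw [coeff_mul, Finset.Nat.sum_antidiagonal_eq_sum_range_succ_mk]
  simp only [coeff_mk]
  cases n with
  | zero => simpa [sqAux_zero] using h0
  | succ n =>
      rw [Finset.sum_range_succ, Finset.sum_range_succ']
      have h1 : ∀ k ∈ Finset.range n,
          sqAux c f (k+1) * sqAux c f (n+1-(k+1)) = sqAux c f (k+1) * sqAux c f (n-k) := by
        intro k hk
        congr 2
        omega
      rw [Finset.sum_congr rfl h1,
        ← Fin.sum_univ_eq_sum_range (fun k => sqAux c f (k+1) * sqAux c f (n-k)) n]
      have h3 : sqAux c f (n+1) =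
          (f (n+1) - ∑ i : Fin n, sqAux c f (i+1) * sqAux c f (n-i)) / (2*c) := by
        rw [sqAux]
      rw [Nat.sub_zero, Nat.sub_self, h3, sqAux_zero]
      field_simp
      ring

lemma polar_eq (a b : ℂ) (g : MvPolynomial (Fin 2) ℂ)
    (hg : g = MvPolynomial.X 1 ^ 3 - MvPolynomial.X 0 ^ 4 * MvPolynomial.X 1)
    (Φ : MvPolynomial (Fin 2) ℂ →ₐ[ℂ] Polynomial (PowerSeries ℂ))
    (hΦ : Φ = MvPolynomial.aeval
      ![Polynomial.C (PowerSeries.X : PowerSeries ℂ), Polynomial.X]) :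
    Φ (MvPolynomial.C a * MvPolynomial.pderiv 0 g +
          MvPolynomial.C b * MvPolynomial.pderiv 1 g) =
      Polynomial.C (PowerSeries.C (R := ℂ) (3*b)) * Polynomial.X^2
      + Polynomial.C (PowerSeries.C (R := ℂ) (-4*a) * PowerSeries.X^3) * Polynomial.X
      + Polynomial.C (PowerSeries.C (R := ℂ) (-b) * PowerSeries.X^4) := by
  subst hg hΦ
  simp [MvPolynomial.pderiv_X, Pi.single_apply, MvPolynomial.aeval_def, MvPolynomial.eval₂_sub,
    MvPolynomial.eval₂_mul, MvPolynomial.eval₂_pow, algebraMap_smul]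
  simp only [PowerSeries.algebraMap_apply, map_ofNat, Algebra.algebraMap_self_apply]
  ring

/-- for `g = y³ − x⁴y`, for every direction `(a, b)` with `b ≠ 0`,
the polar `a·∂g/∂x + b·∂g/∂y`, regarded as a polynomial in `y` over `ℂ⟦x⟧`,
factors as `3b·(y − η₁)(y − η₂)` where `η₁, η₂` and `η₁ − η₂` all have order
exactly `2`. -/
theorem stmt9 (g : MvPolynomial (Fin 2) ℂ)
    (hg : g = MvPolynomial.X 1 ^ 3 - MvPolynomial.X 0 ^ 4 * MvPolynomial.X 1)
    (Φ : MvPolynomial (Fin 2) ℂ →ₐ[ℂ] Polynomial (PowerSeries ℂ))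
    (hΦ : Φ = MvPolynomial.aeval
      ![Polynomial.C (PowerSeries.X : PowerSeries ℂ), Polynomial.X])
    (a b : ℂ) (hb : b ≠ 0) :
    ∃ η₁ η₂ : PowerSeries ℂ,
      Φ (MvPolynomial.C a * MvPolynomial.pderiv 0 g +
          MvPolynomial.C b * MvPolynomial.pderiv 1 g) =
        Polynomial.C (PowerSeries.C (R := ℂ) (3 * b)) *
          (Polynomial.X - Polynomial.C η₁) * (Polynomial.X - Polynomial.C η₂) ∧
      η₁.order = 2 ∧ η₂.order = 2 ∧ (η₁ - η₂).order = 2 := by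
  -- the square root of the (rescaled) discriminant
  set c : ℂ := (((Real.sqrt 3 : ℝ) : ℂ))⁻¹ with hcdef
  have h3 : ((Real.sqrt 3 : ℝ) : ℂ) * ((Real.sqrt 3 : ℝ) : ℂ) = 3 := by
    norm_cast
    rw [Real.mul_self_sqrt (by norm_num)]
  have hcne : c ≠ 0 := by
    have h0 : ((Real.sqrt 3 : ℝ) : ℂ) ≠ 0 := by
      norm_cast
      positivity
    exact inv_ne_zero h0
  have hc : c * c = 1/3 := by
    rw [hcdef, ← mul_inv, h3]
    norm_num
  set F : ℕ → ℂ := fun n => if n = 0 then 1/3 else if n = 2 then 4*a^2/(9*b^2) else 0 with hF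
  set w : PowerSeries ℂ := PowerSeries.mk (sqAux c F) with hwdef
  have hw0 : PowerSeries.coeff (R := ℂ) 0 w = c := by simp [hwdef, sqAux_zero]
  have hmkF : (PowerSeries.mk F : PowerSeries ℂ)
      = PowerSeries.C (R := ℂ) (1/3) + PowerSeries.C (R := ℂ) (4*a^2/(9*b^2)) * PowerSeries.X^2 := by
    ext n
    simp only [coeff_mk, map_add, PowerSeries.coeff_C, PowerSeries.coeff_C_mul,
      PowerSeries.coeff_X_pow, hF]
    split_ifs <;> simp_all
  have hw2 : w * w = PowerSeries.C (R := ℂ) (1/3) + PowerSeries.C (R := ℂ) (4*a^2/(9*b^2)) * PowerSeries.X^2 := by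
    rw [hwdef, sq_sqAux c hcne F (by simp [hF, hc]), hmkF]
  -- the two roots
  set s : PowerSeries ℂ := PowerSeries.C (R := ℂ) (2*a/(3*b)) * PowerSeries.X^3 with hs
  set r : PowerSeries ℂ := PowerSeries.X^2 * w with hr
  refine ⟨s + r, s - r, ?_, ?_, ?_, ?_⟩
  · -- factorization
    rw [polar_eq a b g hg Φ hΦ]
    have expand : Polynomial.C (PowerSeries.C (R := ℂ) (3 * b)) *
          (Polynomial.X - Polynomial.C (s + r)) * (Polynomial.X - Polynomial.C (s - r)) =
        Polynomial.C (PowerSeries.C (R := ℂ) (3*b)) * Polynomial.X^2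
        - Polynomial.C (PowerSeries.C (R := ℂ) (3*b) * ((s+r) + (s-r))) * Polynomial.X
        + Polynomial.C (PowerSeries.C (R := ℂ) (3*b) * ((s+r) * (s-r))) := by
      simp only [map_mul, map_add, map_sub]
      ring
    have hsum3b : PowerSeries.C (R := ℂ) (3*b) * ((s+r) + (s-r)) = PowerSeries.C (R := ℂ) (4*a) *
        PowerSeries.X^3 := by
      have : (s+r) + (s-r) = PowerSeries.C (R := ℂ) (2*a/(3*b)) * PowerSeries.X^3
          + PowerSeries.C (R := ℂ) (2*a/(3*b)) * PowerSeries.X^3 := by rw [hs]; ring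
      rw [this, ← mul_add, ← mul_assoc, ← map_mul]
      calc PowerSeries.C (R := ℂ) (3*b*(2*a/(3*b))) * (PowerSeries.X^3 + PowerSeries.X^3)
          = PowerSeries.C (R := ℂ) (2*a) * (PowerSeries.X^3 + PowerSeries.X^3) := by
            rw [show (3*b*(2*a/(3*b)) : ℂ) = 2*a by field_simp]
        _ = (PowerSeries.C (R := ℂ) (2*a) + PowerSeries.C (R := ℂ) (2*a)) * PowerSeries.X^3 := by ring
        _ = PowerSeries.C (R := ℂ) (4*a) * PowerSeries.X^3 := by
            rw [← map_add]
            congr 1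
            ring
    have hprod3b : PowerSeries.C (R := ℂ) (3*b) * ((s+r) * (s-r))
        = -(PowerSeries.C (R := ℂ) b * PowerSeries.X^4) := by
      have hr2 : r * r = PowerSeries.C (R := ℂ) (1/3) * PowerSeries.X^4
          + PowerSeries.C (R := ℂ) (4*a^2/(9*b^2)) * PowerSeries.X^6 := by
        rw [hr, show PowerSeries.X^2 * w * (PowerSeries.X^2 * w)
          = PowerSeries.X^4 * (w * w) by ring, hw2]
        ring
      have hs2 : s * s = PowerSeries.C (R := ℂ) (4*a^2/(9*b^2)) * PowerSeries.X^6 := by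
        rw [hs, show PowerSeries.C (R := ℂ) (2*a/(3*b)) * PowerSeries.X ^ 3 *
            (PowerSeries.C (R := ℂ) (2*a/(3*b)) * PowerSeries.X ^ 3)
          = PowerSeries.C (R := ℂ) (2*a/(3*b)) * PowerSeries.C (R := ℂ) (2*a/(3*b)) * PowerSeries.X^6 by ring,
          ← map_mul]
        congr 2
        field_simp
        ring
      calc PowerSeries.C (R := ℂ) (3*b) * ((s+r) * (s-r))
          = PowerSeries.C (R := ℂ) (3*b) * (s * s) - PowerSeries.C (R := ℂ) (3*b) * (r * r) := by ring
        _ = -(PowerSeries.C (R := ℂ) (3*b) * PowerSeries.C (R := ℂ) (1/3) * PowerSeries.X^4) := by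
            rw [hs2, hr2]; ring
        _ = -(PowerSeries.C (R := ℂ) b * PowerSeries.X^4) := by
            rw [← map_mul]
            congr 2
            ring
    rw [expand, hsum3b, hprod3b]
    simp only [neg_mul, map_neg, map_mul]
    ring
  · -- order of η₁
    rw [← Nat.cast_ofNat (R := ℕ∞) (n := 2), PowerSeries.order_eq_nat]
    constructor
    · have h2 : PowerSeries.coeff (R := ℂ) 2 (s + r) = c := by
        simp [hs, hr, hwdef, PowerSeries.coeff_C_mul, PowerSeries.coeff_X_pow,
          PowerSeries.coeff_X_pow_mul' (PowerSeries.mk (sqAux c F)) 2 2, sqAux_zero,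
          PowerSeries.constantCoeff_mk]
      rw [h2]
      exact hcne
    · intro i hi
      interval_cases i <;>
        simp [hs, hr, PowerSeries.coeff_C_mul, PowerSeries.coeff_X_pow,
          PowerSeries.coeff_X_pow_mul']
  · -- order of η₂
    rw [← Nat.cast_ofNat (R := ℕ∞) (n := 2), PowerSeries.order_eq_nat]
    constructor
    · have h2 : PowerSeries.coeff (R := ℂ) 2 (s - r) = -c := by
        simp [hs, hr, hwdef, PowerSeries.coeff_C_mul, PowerSeries.coeff_X_pow,
          PowerSeries.coeff_X_pow_mul' (PowerSeries.mk (sqAux c F)) 2 2, sqAux_zero,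
          PowerSeries.constantCoeff_mk]
      rw [h2]
      simpa using hcne
    · intro i hi
      interval_cases i <;>
        simp [hs, hr, PowerSeries.coeff_C_mul, PowerSeries.coeff_X_pow,
          PowerSeries.coeff_X_pow_mul']
  · -- order of η₁ - η₂
    have : (s + r) - (s - r) = r + r := by ring
    rw [this, ← Nat.cast_ofNat (R := ℕ∞) (n := 2), PowerSeries.order_eq_nat]
    constructor
    · have h2 : PowerSeries.coeff (R := ℂ) 2 (r + r) = c + c := by
        simp [hr, hwdef, PowerSeries.coeff_X_pow_mul' (PowerSeries.mk (sqAux c F)) 2 2,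
          sqAux_zero, PowerSeries.constantCoeff_mk]
      rw [h2]
      intro h
      exact hcne (by linear_combination h/2)
    · intro i hi
      interval_cases i <;> simp [hr, PowerSeries.coeff_X_pow_mul']
end
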